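/- (Multilevel Monte Carlo complexity, case β > γ.) Assume M1–M3 hold with β > γ and α ≥ ½ min(β, γ). Then there exists a constant K > 0, depending only on α, β, γ, c₁, c₂, c₃, M and h₀, such that for every 0 < ε < e^{−1} there exist a level L ∈ ℕ and positive integers N_0, …, N_L with MSE(L, (N_ℓ)) ≤ ε² and Cost(L, (N_ℓ)) ≤ K ε^{−2}. -/

import Mathlib

open MeasureTheory ProbabilityTheory Finset

set_option maxHeartbeats 1000000 in
/-- Multilevel Monte Carlo complexity theorem, case `β > γ`: under M1–M3 with
`α ≥ ½ min(β,γ)`, for every `0 < ε < e⁻¹` there are a level `L` and sample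
numbers `N_ℓ` such that the MLMC mean square error is at most `ε²` and the
total cost is at most `K ε⁻²`, with `K` independent of `ε`. -/
theorem mlmc_complexity_beta_gt_gamma
    {Ω : Type*} [MeasurableSpace Ω] {P : Measure Ω} [IsProbabilityMeasure P]
    (M : ℕ) (hM : 2 ≤ M) (h₀ : ℝ) (hh₀ : 0 < h₀)
    (Q : Ω → ℝ) (hQ : MemLp Q 2 P)
    (Qlev : ℕ → Ω → ℝ) (hQlev : ∀ ℓ, MemLp (Qlev ℓ) 2 P)
    (Y : ℕ → Ω → ℝ) (hY0 : Y 0 = Qlev 0)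
    (hYl : ∀ ℓ : ℕ, Y (ℓ + 1) = fun ω => Qlev (ℓ + 1) ω - Qlev ℓ ω)
    (α β γ c₁ c₂ c₃ : ℝ)
    (hα : 0 < α) (hβ : 0 < β) (hγ : 0 < γ) (hc₁ : 0 < c₁) (hc₂ : 0 < c₂) (hc₃ : 0 < c₃)
    (hβγ : β > γ) (hαβγ : α ≥ min β γ / 2)
    (hM1 : ∀ ℓ : ℕ, |∫ ω, (Qlev ℓ ω - Q ω) ∂P| ≤ c₁ * (h₀ / (M : ℝ) ^ ℓ) ^ α)
    (hM2 : ∀ ℓ : ℕ, variance (Y ℓ) P ≤ c₂ * (h₀ / (M : ℝ) ^ ℓ) ^ β) :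
    ∃ K : ℝ, 0 < K ∧ ∀ ε : ℝ, 0 < ε → ε < Real.exp (-1) →
      ∃ (L : ℕ) (N : ℕ → ℕ), (∀ ℓ ≤ L, 1 ≤ N ℓ) ∧
        (∑ ℓ ∈ range (L + 1), variance (Y ℓ) P / (N ℓ : ℝ))
            + (∫ ω, (Qlev L ω - Q ω) ∂P) ^ 2 ≤ ε ^ 2 ∧
        ∑ ℓ ∈ range (L + 1), (N ℓ : ℝ) * (c₃ * (h₀ / (M : ℝ) ^ ℓ) ^ (-γ))
            ≤ K * ε ^ (-2 : ℝ) := by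
  have hm1 : (1:ℝ) < (M:ℝ) := by exact_mod_cast lt_of_lt_of_le one_lt_two hM
  set m : ℝ := (M:ℝ) with hm_def
  have hm0 : (0:ℝ) < m := lt_trans one_pos hm1
  have hlm : 0 < Real.log m := Real.log_pos hm1
  -- key rewriting lemma
  have key : ∀ (z : ℝ) (ℓ : ℕ), (h₀ / m ^ ℓ) ^ z = h₀ ^ z * (m ^ (-z)) ^ ℓ := by
    intro z ℓ
    rw [Real.div_rpow hh₀.le (by positivity), ← Real.rpow_natCast m ℓ,
      ← Real.rpow_mul hm0.le, mul_comm (ℓ:ℝ) z, Real.rpow_mul hm0.le,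
      Real.rpow_natCast, Real.rpow_neg hm0.le, inv_pow, div_eq_mul_inv]
  have hd0 : 0 < (β - γ) / 2 := by linarith
  set q : ℝ := m ^ (-((β - γ) / 2)) with hq_def
  have hq0 : 0 < q := Real.rpow_pos_of_pos hm0 _
  have hq1 : q < 1 := Real.rpow_lt_one_of_one_lt_of_neg hm1 (by linarith)
  have h1q : 0 < 1 - q := by linarith
  set u : ℝ := m ^ (-((β + γ) / 2)) with hu_def
  have hu0 : 0 < u := Real.rpow_pos_of_pos hm0 _
  set v : ℝ := m ^ (-β) with hv_def
  have hv0 : 0 < v := Real.rpow_pos_of_pos hm0 _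
  set s : ℝ := m ^ γ with hs_def
  have hs1 : 1 < s := (Real.one_lt_rpow_iff_of_pos hm0).mpr (Or.inl ⟨hm1, hγ⟩)
  have hs0 : 0 < s := lt_trans one_pos hs1
  have hsm1 : 0 < s - 1 := by linarith
  have hvu : v = q * u := by
    rw [hq_def, hu_def, hv_def, ← Real.rpow_add hm0]
    congr 1; ring
  have hus : u * s = q := by
    rw [hq_def, hu_def, hs_def, ← Real.rpow_add hm0]
    congr 1; ring
  -- geometric sum bound
  have geom : ∀ n : ℕ, ∑ i ∈ range n, q ^ i ≤ (1 - q)⁻¹ := by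
    intro n
    have h := Summable.sum_le_tsum (range n) (fun i _ => by positivity)
      (summable_geometric_of_lt_one hq0.le hq1)
    rwa [tsum_geometric_of_lt_one hq0.le hq1] at h
  have hh₀β : 0 < h₀ ^ β := Real.rpow_pos_of_pos hh₀ _
  have hh₀α : 0 < h₀ ^ α := Real.rpow_pos_of_pos hh₀ _
  have hh₀γ : 0 < h₀ ^ (-γ) := Real.rpow_pos_of_pos hh₀ _
  set A : ℝ := 2 * c₂ * h₀ ^ β / (1 - q) with hA_def
  have hA0 : 0 < A := by positivity
  set c₀ : ℝ := Real.sqrt 2 * c₁ * h₀ ^ α with hc₀_def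
  have hc₀0 : 0 < c₀ := by positivity
  have hga : γ / α ≤ 2 := by
    have hmin : min β γ = γ := min_eq_right hβγ.le
    rw [hmin] at hαβγ
    rw [div_le_iff₀ hα]; linarith
  have hga0 : 0 ≤ γ / α := by positivity
  refine ⟨A * c₃ * h₀ ^ (-γ) * (1 - q)⁻¹
      + c₃ * h₀ ^ (-γ) * s ^ 2 / (s - 1) * (c₀ ^ (γ / α) + 1), ?_, ?_⟩
  · have h1 : 0 < A * c₃ * h₀ ^ (-γ) * (1 - q)⁻¹ := by positivity
    have h2 : 0 < c₃ * h₀ ^ (-γ) * s ^ 2 / (s - 1) * (c₀ ^ (γ / α) + 1) := by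
      have : 0 < c₀ ^ (γ / α) + 1 := by positivity
      positivity
    linarith
  intro ε hε hεe
  have hε1 : ε < 1 := lt_trans hεe (Real.exp_lt_one_iff.mpr (by norm_num))
  have hεinv1 : 1 ≤ (ε ^ 2)⁻¹ := by
    rw [le_inv_comm₀ one_pos (by positivity)]
    nlinarith
  set T : ℝ := c₀ / ε with hT_def
  have hT0 : 0 < T := by positivity
  set T' : ℝ := max T 1 with hT'_def
  have hT'1 : 1 ≤ T' := le_max_right _ _
  have hT'0 : 0 < T' := lt_of_lt_of_le one_pos hT'1
  have hlogT' : 0 ≤ Real.log T' := Real.log_nonneg hT'1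
  set ρ : ℝ := Real.log T' / (α * Real.log m) with hρ_def
  have hρ0 : 0 ≤ ρ := by positivity
  refine ⟨⌈ρ⌉₊, fun ℓ => ⌈A * u ^ ℓ / ε ^ 2⌉₊, ?_, ?_, ?_⟩
  · intro ℓ _
    exact Nat.ceil_pos.mpr (by positivity)
  · -- MSE bound
    have hterm : ∀ ℓ : ℕ, variance (Y ℓ) P / ((⌈A * u ^ ℓ / ε ^ 2⌉₊ : ℕ) : ℝ)
        ≤ ε ^ 2 * c₂ * h₀ ^ β / A * q ^ ℓ := by
      intro ℓ
      have hB : 0 < A * u ^ ℓ / ε ^ 2 := by positivity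
      have hNB : A * u ^ ℓ / ε ^ 2 ≤ ((⌈A * u ^ ℓ / ε ^ 2⌉₊ : ℕ) : ℝ) := Nat.le_ceil _
      have hVle : variance (Y ℓ) P ≤ c₂ * h₀ ^ β * v ^ ℓ := by
        have h := hM2 ℓ
        rw [key β ℓ, ← mul_assoc] at h
        exact h
      have h1 : variance (Y ℓ) P / ((⌈A * u ^ ℓ / ε ^ 2⌉₊ : ℕ) : ℝ)
          ≤ (c₂ * h₀ ^ β * v ^ ℓ) / (A * u ^ ℓ / ε ^ 2) :=
        div_le_div₀ (by positivity) hVle hB hNB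
      refine h1.trans (le_of_eq ?_)
      rw [hvu, mul_pow]
      field_simp
    have hVsum : (∑ ℓ ∈ range (⌈ρ⌉₊ + 1), variance (Y ℓ) P / ((⌈A * u ^ ℓ / ε ^ 2⌉₊ : ℕ) : ℝ))
        ≤ ε ^ 2 / 2 := by
      calc (∑ ℓ ∈ range (⌈ρ⌉₊ + 1), variance (Y ℓ) P / ((⌈A * u ^ ℓ / ε ^ 2⌉₊ : ℕ) : ℝ))
          ≤ ∑ ℓ ∈ range (⌈ρ⌉₊ + 1), ε ^ 2 * c₂ * h₀ ^ β / A * q ^ ℓ :=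
            sum_le_sum fun ℓ _ => hterm ℓ
        _ = ε ^ 2 * c₂ * h₀ ^ β / A * ∑ ℓ ∈ range (⌈ρ⌉₊ + 1), q ^ ℓ := by rw [mul_sum]
        _ ≤ ε ^ 2 * c₂ * h₀ ^ β / A * (1 - q)⁻¹ :=
            mul_le_mul_of_nonneg_left (geom _) (by positivity)
        _ = ε ^ 2 / 2 := by
            rw [hA_def]
            field_simp
    have hmono : Real.log T' ≤ α * (⌈ρ⌉₊ : ℝ) * Real.log m := by
      calc Real.log T' = ρ * (α * Real.log m) := by
            rw [hρ_def]; field_simp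
        _ ≤ (⌈ρ⌉₊ : ℝ) * (α * Real.log m) :=
            mul_le_mul_of_nonneg_right (Nat.le_ceil ρ) (by positivity)
        _ = α * (⌈ρ⌉₊ : ℝ) * Real.log m := by ring
    have hT'le : T' ≤ m ^ (α * (⌈ρ⌉₊ : ℝ)) := by
      rw [Real.rpow_def_of_pos hm0]
      calc T' = Real.exp (Real.log T') := (Real.exp_log hT'0).symm
        _ ≤ Real.exp (Real.log m * (α * (⌈ρ⌉₊ : ℝ))) := by
            apply Real.exp_le_exp.mpr
            calc Real.log T' ≤ α * (⌈ρ⌉₊ : ℝ) * Real.log m := hmono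
              _ = Real.log m * (α * (⌈ρ⌉₊ : ℝ)) := by ring
    have hbias : c₁ * (h₀ / m ^ ⌈ρ⌉₊) ^ α ≤ ε / Real.sqrt 2 := by
      rw [key α ⌈ρ⌉₊]
      have hpow : (m ^ (-α)) ^ ⌈ρ⌉₊ = (m ^ (α * (⌈ρ⌉₊ : ℝ)))⁻¹ := by
        rw [← Real.rpow_natCast (m ^ (-α)) ⌈ρ⌉₊, ← Real.rpow_mul hm0.le,
          show -α * ((⌈ρ⌉₊ : ℕ) : ℝ) = -(α * (⌈ρ⌉₊ : ℝ)) by push_cast; ring,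
          Real.rpow_neg hm0.le]
      rw [hpow]
      have hinv : (m ^ (α * (⌈ρ⌉₊ : ℝ)))⁻¹ ≤ T⁻¹ := by
        apply inv_anti₀ hT0 (le_trans (le_max_left T 1) hT'le)
      calc c₁ * (h₀ ^ α * (m ^ (α * (⌈ρ⌉₊ : ℝ)))⁻¹) ≤ c₁ * (h₀ ^ α * T⁻¹) := by
            apply mul_le_mul_of_nonneg_left (mul_le_mul_of_nonneg_left hinv hh₀α.le) hc₁.le
        _ = ε / Real.sqrt 2 := by
            rw [hT_def, hc₀_def]
            have h2 : Real.sqrt 2 ≠ 0 := by positivity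
            field_simp
    have hbias2 : (∫ ω, (Qlev ⌈ρ⌉₊ ω - Q ω) ∂P) ^ 2 ≤ ε ^ 2 / 2 := by
      have h1 := (hM1 ⌈ρ⌉₊).trans hbias
      have h2 : |∫ ω, (Qlev ⌈ρ⌉₊ ω - Q ω) ∂P| ^ 2 ≤ (ε / Real.sqrt 2) ^ 2 :=
        pow_le_pow_left₀ (abs_nonneg _) h1 2
      rw [sq_abs] at h2
      refine h2.trans (le_of_eq ?_)
      rw [div_pow, Real.sq_sqrt (by norm_num : (0:ℝ) ≤ 2)]
    linarith
  · -- cost bound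
    have hε2 : ε ^ ((-2 : ℝ)) = (ε ^ 2)⁻¹ := by
      rw [show ((-2):ℝ) = -((2:ℕ):ℝ) by norm_num, Real.rpow_neg hε.le, Real.rpow_natCast]
    have hNle : ∀ ℓ : ℕ, ((⌈A * u ^ ℓ / ε ^ 2⌉₊ : ℕ) : ℝ) ≤ A * u ^ ℓ / ε ^ 2 + 1 :=
      fun ℓ => (Nat.ceil_lt_add_one (by positivity)).le
    have hCterm : ∀ ℓ : ℕ, ((⌈A * u ^ ℓ / ε ^ 2⌉₊ : ℕ) : ℝ) * (c₃ * (h₀ / m ^ ℓ) ^ (-γ))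
        ≤ A * c₃ * h₀ ^ (-γ) / ε ^ 2 * q ^ ℓ + c₃ * h₀ ^ (-γ) * s ^ ℓ := by
      intro ℓ
      rw [key (-γ) ℓ, neg_neg]
      calc ((⌈A * u ^ ℓ / ε ^ 2⌉₊ : ℕ) : ℝ) * (c₃ * (h₀ ^ (-γ) * s ^ ℓ))
          ≤ (A * u ^ ℓ / ε ^ 2 + 1) * (c₃ * (h₀ ^ (-γ) * s ^ ℓ)) :=
            mul_le_mul_of_nonneg_right (hNle ℓ) (by positivity)
        _ = A * c₃ * h₀ ^ (-γ) / ε ^ 2 * (u ^ ℓ * s ^ ℓ) + c₃ * h₀ ^ (-γ) * s ^ ℓ := by ring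
        _ = A * c₃ * h₀ ^ (-γ) / ε ^ 2 * q ^ ℓ + c₃ * h₀ ^ (-γ) * s ^ ℓ := by
            rw [← mul_pow, hus]
    have hgeom2 : ∑ ℓ ∈ range (⌈ρ⌉₊ + 1), s ^ ℓ ≤ s ^ (⌈ρ⌉₊ + 1) / (s - 1) := by
      rw [geom_sum_eq hs1.ne']
      gcongr
      linarith
    have hsL : s ^ ⌈ρ⌉₊ ≤ s * T' ^ (γ / α) := by
      have h1 : s ^ ⌈ρ⌉₊ = Real.exp ((⌈ρ⌉₊ : ℝ) * (Real.log m * γ)) := by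
        rw [hs_def, Real.rpow_def_of_pos hm0, ← Real.exp_nat_mul]
      have h3 : ρ * (Real.log m * γ) = Real.log T' * (γ / α) := by
        rw [hρ_def]; field_simp
      have hL : (⌈ρ⌉₊ : ℝ) ≤ ρ + 1 := (Nat.ceil_lt_add_one hρ0).le
      have h2 : (⌈ρ⌉₊ : ℝ) * (Real.log m * γ) ≤ Real.log m * γ + Real.log T' * (γ / α) := by
        have hm' := mul_le_mul_of_nonneg_right hL
          (show (0:ℝ) ≤ Real.log m * γ by positivity)
        have hexp : (ρ + 1) * (Real.log m * γ) = ρ * (Real.log m * γ) + Real.log m * γ := by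
          ring
        linarith
      rw [h1]
      calc Real.exp ((⌈ρ⌉₊ : ℝ) * (Real.log m * γ))
          ≤ Real.exp (Real.log m * γ + Real.log T' * (γ / α)) := Real.exp_le_exp.mpr h2
        _ = s * T' ^ (γ / α) := by
            rw [Real.exp_add, hs_def, Real.rpow_def_of_pos hm0, Real.rpow_def_of_pos hT'0]
    have hT'b : T' ^ (γ / α) ≤ (c₀ ^ (γ / α) + 1) * (ε ^ 2)⁻¹ := by
      rcases le_total T 1 with h | h
      · rw [hT'_def, max_eq_right h, Real.one_rpow]
        calc (1:ℝ) ≤ (ε ^ 2)⁻¹ := hεinv1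
          _ = 1 * (ε ^ 2)⁻¹ := (one_mul _).symm
          _ ≤ (c₀ ^ (γ / α) + 1) * (ε ^ 2)⁻¹ := by
              have hc : (0:ℝ) ≤ c₀ ^ (γ / α) := by positivity
              apply mul_le_mul_of_nonneg_right (by linarith) (by positivity)
      · rw [hT'_def, max_eq_left h, hT_def, Real.div_rpow hc₀0.le hε.le]
        have h6 : ε ^ 2 ≤ ε ^ (γ / α) := by
          calc ε ^ 2 = ε ^ ((2:ℕ) : ℝ) := (Real.rpow_natCast ε 2).symm
            _ ≤ ε ^ (γ / α) := by
                apply Real.rpow_le_rpow_of_exponent_ge hε hε1.le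
                push_cast; exact hga
        have h7 : (ε ^ (γ / α))⁻¹ ≤ (ε ^ 2)⁻¹ := inv_anti₀ (by positivity) h6
        calc c₀ ^ (γ / α) / ε ^ (γ / α) = c₀ ^ (γ / α) * (ε ^ (γ / α))⁻¹ := div_eq_mul_inv _ _
          _ ≤ c₀ ^ (γ / α) * (ε ^ 2)⁻¹ := mul_le_mul_of_nonneg_left h7 (by positivity)
          _ ≤ (c₀ ^ (γ / α) + 1) * (ε ^ 2)⁻¹ := by
              apply mul_le_mul_of_nonneg_right (by linarith) (by positivity)
    have hs2 : c₃ * h₀ ^ (-γ) * (s ^ (⌈ρ⌉₊ + 1) / (s - 1))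
        ≤ c₃ * h₀ ^ (-γ) * s ^ 2 / (s - 1) * (c₀ ^ (γ / α) + 1) * (ε ^ 2)⁻¹ := by
      have h8 : s ^ (⌈ρ⌉₊ + 1) ≤ s ^ 2 * ((c₀ ^ (γ / α) + 1) * (ε ^ 2)⁻¹) := by
        rw [pow_succ]
        calc s ^ ⌈ρ⌉₊ * s ≤ s * T' ^ (γ / α) * s := mul_le_mul_of_nonneg_right hsL hs0.le
          _ = s ^ 2 * T' ^ (γ / α) := by ring
          _ ≤ s ^ 2 * ((c₀ ^ (γ / α) + 1) * (ε ^ 2)⁻¹) :=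
              mul_le_mul_of_nonneg_left hT'b (by positivity)
      calc c₃ * h₀ ^ (-γ) * (s ^ (⌈ρ⌉₊ + 1) / (s - 1))
          ≤ c₃ * h₀ ^ (-γ) * (s ^ 2 * ((c₀ ^ (γ / α) + 1) * (ε ^ 2)⁻¹) / (s - 1)) := by
            gcongr
        _ = c₃ * h₀ ^ (-γ) * s ^ 2 / (s - 1) * (c₀ ^ (γ / α) + 1) * (ε ^ 2)⁻¹ := by
            field_simp
    rw [hε2, add_mul]
    calc ∑ ℓ ∈ range (⌈ρ⌉₊ + 1), ((⌈A * u ^ ℓ / ε ^ 2⌉₊ : ℕ) : ℝ) * (c₃ * (h₀ / m ^ ℓ) ^ (-γ))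
        ≤ ∑ ℓ ∈ range (⌈ρ⌉₊ + 1),
            (A * c₃ * h₀ ^ (-γ) / ε ^ 2 * q ^ ℓ + c₃ * h₀ ^ (-γ) * s ^ ℓ) :=
          sum_le_sum fun ℓ _ => hCterm ℓ
      _ = A * c₃ * h₀ ^ (-γ) / ε ^ 2 * (∑ ℓ ∈ range (⌈ρ⌉₊ + 1), q ^ ℓ)
            + c₃ * h₀ ^ (-γ) * (∑ ℓ ∈ range (⌈ρ⌉₊ + 1), s ^ ℓ) := by
          rw [sum_add_distrib, mul_sum, mul_sum]
      _ ≤ A * c₃ * h₀ ^ (-γ) / ε ^ 2 * (1 - q)⁻¹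
            + c₃ * h₀ ^ (-γ) * (s ^ (⌈ρ⌉₊ + 1) / (s - 1)) := by
          apply add_le_add
          · exact mul_le_mul_of_nonneg_left (geom _) (by positivity)
          · exact mul_le_mul_of_nonneg_left hgeom2 (by positivity)
      _ ≤ A * c₃ * h₀ ^ (-γ) * (1 - q)⁻¹ * (ε ^ 2)⁻¹
            + c₃ * h₀ ^ (-γ) * s ^ 2 / (s - 1) * (c₀ ^ (γ / α) + 1) * (ε ^ 2)⁻¹ := by
          apply add_le_add _ hs2
          apply le_of_eq
          ring
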